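/- Let k be a field of characteristic zero, a_0 ∈ k^×, and f = a_0 + Σ_{i≥1} a_i t^i ∈ k[[t]]. Set u := exp(Σ_{i≥1} (a_i/(i·a_0)) t^i) ∈ k[[t]] and s := t·u. Then u has constant term 1, s has order exactly 1, and f(t)·s(t) = a_0·t·s'(t) in k[[t]]; equivalently, f dt/t = a_0 ds/s as formal differentials. -/

import Mathlib

open PowerSeries

variable {k : Type*} [Field k]

/-- Formal exponential `exp f = Σ_{n≥0} f^n/n!` of a power series (intended for `f`
with zero constant term, where the defining sum is `t`-adically convergent). -/
noncomputable def PowerSeries.pexp (f : PowerSeries k) : PowerSeries k :=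
  PowerSeries.mk fun m => ∑ n ∈ Finset.range (m + 1),
    (Nat.factorial n : k)⁻¹ * coeff m (f ^ n)

namespace ExplicitGoodCoord

lemma coeff_derivativeFun (f : PowerSeries k) (n : ℕ) :
    coeff n f.derivativeFun = coeff (n + 1) f * (n + 1) :=
  PowerSeries.coeff_derivative f n

lemma coeff_pow_lt_zero (g : PowerSeries k) (hg : constantCoeff g = 0)
    {m n : ℕ} (h : m < n) : coeff m (g ^ n) = 0 := by
  have hd : (X : PowerSeries k) ^ n ∣ g ^ n :=
    pow_dvd_pow_of_dvd (PowerSeries.X_dvd_iff.mpr hg) n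
  exact (PowerSeries.X_pow_dvd_iff.mp hd) m h

lemma coeff_pexp (g : PowerSeries k) (hg : constantCoeff g = 0)
    (m N : ℕ) (hN : m + 1 ≤ N) :
    coeff m g.pexp = ∑ n ∈ Finset.range N, (Nat.factorial n : k)⁻¹ * coeff m (g ^ n) := by
  rw [PowerSeries.pexp, coeff_mk]
  refine Finset.sum_subset (Finset.range_subset_range.mpr hN) (fun n _ hn => ?_)
  rw [Finset.mem_range, not_lt] at hn
  rw [coeff_pow_lt_zero g hg (Nat.lt_of_succ_le hn), mul_zero]

/-- Finite truncated exponential sums. -/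
noncomputable def E (g : PowerSeries k) (N : ℕ) : PowerSeries k :=
  ∑ n ∈ Finset.range N, PowerSeries.C (Nat.factorial n : k)⁻¹ * g ^ n

lemma coeff_E (g : PowerSeries k) (N m : ℕ) :
    coeff m (E g N) = ∑ n ∈ Finset.range N, (Nat.factorial n : k)⁻¹ * coeff m (g ^ n) := by
  simp [E, PowerSeries.coeff_C_mul]

lemma coeff_pexp_eq_E (g : PowerSeries k) (hg : constantCoeff g = 0)
    {m N : ℕ} (hN : m + 1 ≤ N) : coeff m g.pexp = coeff m (E g N) := by
  rw [coeff_pexp g hg m N hN, coeff_E]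

lemma coeff_mul_congr (A B₁ B₂ : PowerSeries k) (m : ℕ)
    (h : ∀ q ≤ m, coeff q B₁ = coeff q B₂) :
    coeff m (A * B₁) = coeff m (A * B₂) := by
  rw [PowerSeries.coeff_mul, PowerSeries.coeff_mul]
  refine Finset.sum_congr rfl fun p hp => ?_
  rw [Finset.HasAntidiagonal.mem_antidiagonal] at hp
  rw [h p.2 (by omega)]

lemma derivativeFun_pow (g : PowerSeries k) (n : ℕ) :
    (g ^ (n + 1)).derivativeFun = PowerSeries.C ((n : k) + 1) * g ^ n * g.derivativeFun := by
  induction n with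
  | zero => simp [pow_one]
  | succ n ih =>
    rw [pow_succ, PowerSeries.derivativeFun_mul, ih, smul_eq_mul, smul_eq_mul]
    have hC : PowerSeries.C (((n + 1 : ℕ) : k) + 1) = PowerSeries.C ((n : k) + 1) + 1 := by
      push_cast
      rw [map_add, map_add, map_one]
    rw [hC]
    ring

lemma derivativeFun_E [CharZero k] (g : PowerSeries k) (N : ℕ) :
    (E g (N + 1)).derivativeFun = g.derivativeFun * E g N := by
  have hsum : (E g (N + 1)).derivativeFun
      = ∑ n ∈ Finset.range (N + 1), (PowerSeries.C (Nat.factorial n : k)⁻¹ * g ^ n).derivativeFun := by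
    rw [E]
    exact map_sum (PowerSeries.derivative k).toLinearMap _ _
  rw [hsum, Finset.sum_range_succ']
  have h0 : (PowerSeries.C (Nat.factorial 0 : k)⁻¹ * g ^ 0).derivativeFun = 0 := by
    simp [PowerSeries.derivativeFun_one, PowerSeries.derivativeFun_C,
      PowerSeries.smul_eq_C_mul, PowerSeries.derivativeFun_mul]
  rw [h0, add_zero, E, Finset.mul_sum]
  refine Finset.sum_congr rfl fun n _ => ?_
  have hn1 : ((n : k) + 1) ≠ 0 := by
    have := Nat.cast_add_one_ne_zero (R := k) n
    exact_mod_cast this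
  have hfn : ((Nat.factorial n : k)) ≠ 0 := Nat.cast_ne_zero.mpr (Nat.factorial_ne_zero n)
  have hfac : ((Nat.factorial (n + 1) : k))⁻¹ * ((n : k) + 1) = (Nat.factorial n : k)⁻¹ := by
    rw [Nat.factorial_succ]
    push_cast
    field_simp
  rw [← PowerSeries.smul_eq_C_mul, PowerSeries.derivativeFun_smul, derivativeFun_pow,
    PowerSeries.smul_eq_C_mul]
  have hstep : PowerSeries.C ((Nat.factorial (n + 1) : k))⁻¹ *
      (PowerSeries.C ((n : k) + 1) * g ^ n * g.derivativeFun)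
      = PowerSeries.C (((Nat.factorial (n + 1) : k))⁻¹ * ((n : k) + 1)) * g ^ n
        * g.derivativeFun := by
    rw [map_mul]
    ring
  rw [hstep, hfac]
  ring

lemma derivativeFun_pexp [CharZero k] (g : PowerSeries k) (hg : constantCoeff g = 0) :
    g.pexp.derivativeFun = g.derivativeFun * g.pexp := by
  ext m
  rw [ExplicitGoodCoord.coeff_derivativeFun,
    coeff_pexp_eq_E g hg (m := m + 1) (N := m + 2) le_rfl,
    ← ExplicitGoodCoord.coeff_derivativeFun, derivativeFun_E g (m + 1),
    coeff_mul_congr _ (E g (m + 1)) g.pexp m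
      (fun q hq => (coeff_pexp_eq_E g hg (m := q) (N := m + 1) (by omega)).symm)]

lemma constantCoeff_pexp (g : PowerSeries k) : constantCoeff g.pexp = 1 := by
  rw [← PowerSeries.coeff_zero_eq_constantCoeff_apply, PowerSeries.pexp, coeff_mk]
  simp

end ExplicitGoodCoord

/-- the explicit good coordinate in the slope-zero case. For
`f = a_0 + Σ_{i≥1} a_i t^i` with `a_0 ≠ 0`, the unit `u := exp(Σ_{i≥1} (a_i/(i·a_0)) t^i)`
has constant term `1`, `s := t·u` has order exactly `1`, and `f(t)·s(t) = a_0·t·s'(t)`,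
i.e. `f dt/t = a_0 ds/s`. -/
theorem explicit_good_coordinate_slope_zero [CharZero k]
    (a0 : k) (ha0 : a0 ≠ 0) (f : PowerSeries k) (hf : constantCoeff f = a0) :
    let u : PowerSeries k :=
      (PowerSeries.mk fun i => if i = 0 then 0 else
        coeff i f * ((i : k) * a0)⁻¹).pexp
    let s : PowerSeries k := X * u
    constantCoeff u = 1 ∧ constantCoeff s = 0 ∧ coeff 1 s ≠ 0 ∧
      f * s = PowerSeries.C a0 * X * s.derivativeFun := by
  intro u s
  set g : PowerSeries k := PowerSeries.mk fun i => if i = 0 then 0 else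
      coeff i f * ((i : k) * a0)⁻¹ with hg_def
  have hg0 : constantCoeff g = 0 := by
    rw [← PowerSeries.coeff_zero_eq_constantCoeff_apply, hg_def, coeff_mk, if_pos rfl]
  have hu1 : constantCoeff u = 1 := ExplicitGoodCoord.constantCoeff_pexp g
  have hs0 : constantCoeff s = 0 := by
    show constantCoeff (X * u) = 0
    rw [map_mul, PowerSeries.constantCoeff_X, zero_mul]
  have hs1 : coeff 1 s ≠ 0 := by
    show coeff 1 (X * u) ≠ 0
    rw [show (1 : ℕ) = 0 + 1 from rfl, PowerSeries.coeff_succ_X_mul,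
      PowerSeries.coeff_zero_eq_constantCoeff_apply, hu1]
    exact one_ne_zero
  refine ⟨hu1, hs0, hs1, ?_⟩
  -- key: f = C a0 * (1 + X * g')
  have hfkey : f = PowerSeries.C a0 * (1 + X * g.derivativeFun) := by
    ext m
    rw [PowerSeries.coeff_C_mul, map_add]
    cases m with
    | zero =>
      simp only [PowerSeries.coeff_zero_eq_constantCoeff_apply, hf, map_mul, map_one,
        PowerSeries.constantCoeff_X, zero_mul, add_zero, mul_one]
    | succ m =>
      rw [PowerSeries.coeff_one, if_neg (Nat.succ_ne_zero m), zero_add,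
        PowerSeries.coeff_succ_X_mul, ExplicitGoodCoord.coeff_derivativeFun, hg_def, coeff_mk,
        if_neg (Nat.succ_ne_zero m)]
      have hm : ((m : k) + 1) ≠ 0 := by
        have := Nat.cast_add_one_ne_zero (R := k) m
        exact_mod_cast this
      push_cast
      field_simp
  have hderiv : s.derivativeFun = (1 + X * g.derivativeFun) * u := by
    show (X * u).derivativeFun = (1 + X * g.derivativeFun) * u
    rw [PowerSeries.derivativeFun_mul, ExplicitGoodCoord.derivativeFun_pexp g hg0]
    have hX : (X : PowerSeries k).derivativeFun = 1 := by
      ext m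
      rw [ExplicitGoodCoord.coeff_derivativeFun, PowerSeries.coeff_X, PowerSeries.coeff_one]
      rcases m with _ | m
      · simp
      · simp [Nat.succ_ne_zero]
    rw [hX]
    show X * (g.derivativeFun * g.pexp) + g.pexp * 1 = (1 + X * g.derivativeFun) * g.pexp
    ring
  rw [hfkey, hderiv]
  show PowerSeries.C a0 * (1 + X * g.derivativeFun) * (X * g.pexp)
      = PowerSeries.C a0 * X * ((1 + X * g.derivativeFun) * g.pexp)
  ring
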